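/- Let q, h, a : ℝ → E³ together with a twice differentiable conical curvature κ : ℝ → ℝ be a Frenet frame of a ruled surface, and assume the frame is positively oriented, i.e., a(s) equals the cross product q(s) × h(s) for all s. Let W(s) = κ(s)·q(s) + a(s) be the Darboux vector. Then for every s, the determinant of the 3×3 matrix whose columns are the coordinates of W(s), W'(s) and W''(s) equals κ'(s)². -/

import Mathlib

open RealInnerProductSpace Matrix

noncomputable section

abbrev E3 := EuclideanSpace ℝ (Fin 3)

/-- A Frenet frame of a ruled surface: `q`, `h`, `a` are orthonormal at every
parameter and satisfy the Frenet equations with conical curvature `κ`. -/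
def IsFrenetFrame (q h a : ℝ → E3) (κ : ℝ → ℝ) : Prop :=
  (∀ s, ⟪q s, q s⟫ = 1 ∧ ⟪h s, h s⟫ = 1 ∧ ⟪a s, a s⟫ = 1 ∧
        ⟪q s, h s⟫ = 0 ∧ ⟪q s, a s⟫ = 0 ∧ ⟪h s, a s⟫ = 0) ∧
  (∀ s, HasDerivAt q (h s) s) ∧
  (∀ s, HasDerivAt h (-q s + κ s • a s) s) ∧
  (∀ s, HasDerivAt a (-(κ s • h s)) s)

/-- The Darboux vector of the frame. -/
def darboux (q a : ℝ → E3) (κ : ℝ → ℝ) : ℝ → E3 := fun s => κ s • q s + a s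

theorem darboux_det_eq_deriv_sq
    (q h a : ℝ → E3) (κ : ℝ → ℝ)
    (hframe : IsFrenetFrame q h a κ)
    (hκ1 : Differentiable ℝ κ)
    (hκ2 : Differentiable ℝ (deriv κ))
    (horient : ∀ s, a s = crossProduct (q s) (h s)) :
    ∀ s, Matrix.det (Matrix.of fun i j =>
      ![darboux q a κ s, deriv (darboux q a κ) s,
        deriv (deriv (darboux q a κ)) s] j i) = (deriv κ s) ^ 2 := by
  obtain ⟨horth, hq, hh, ha⟩ := hframe
  intro s
  have hW : ∀ t, HasDerivAt (darboux q a κ) (deriv κ t • q t) t := by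
    intro t
    have h1 := (((hκ1 t).hasDerivAt.smul (hq t))).add (ha t)
    exact (show HasDerivAt (darboux q a κ) _ t from h1).congr_deriv (by abel)
  have hW1 : deriv (darboux q a κ) = fun t => deriv κ t • q t :=
    funext fun t => (hW t).deriv
  have hW2 : HasDerivAt (deriv (darboux q a κ))
      (deriv (deriv κ) s • q s + deriv κ s • h s) s := by
    rw [hW1]
    have h2 := ((hκ2 s).hasDerivAt.smul (hq s))
    exact h2.congr_deriv (by abel)
  have e2 : deriv (darboux q a κ) s = deriv κ s • q s := (hW s).deriv
  have e3 : deriv (deriv (darboux q a κ)) s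
      = deriv (deriv κ) s • q s + deriv κ s • h s := hW2.deriv
  obtain ⟨huu, hvv, hww, huv, huw, hvw⟩ := horth s
  have hcr := horient s
  simp only [PiLp.inner_apply, RCLike.inner_apply, conj_trivial, Fin.sum_univ_three] at huu hvv huv
  rw [Matrix.det_fin_three]
  simp only [Matrix.of_apply, Matrix.cons_val', Matrix.cons_val_zero, Matrix.cons_val_one,
    Matrix.head_cons, Matrix.cons_val_two, Matrix.tail_cons, Matrix.empty_val',
    Matrix.cons_val_fin_one, Matrix.head_fin_const]
  rw [e2, e3]
  simp only [darboux, hcr, crossProduct, LinearMap.mk₂_apply, PiLp.add_apply, PiLp.smul_apply,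
    smul_eq_mul, Matrix.cons_val_zero, Matrix.cons_val_one, Matrix.head_cons, Matrix.cons_val_two,
    Matrix.tail_cons]
  ring_nf
  linear_combination (deriv κ s)^2 * ((q s 0^2 + q s 1^2 + q s 2^2) * hvv + huu
    - (q s 0 * h s 0 + q s 1 * h s 1 + q s 2 * h s 2) * huv)
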